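/- Let 0 < β < 2, let τ > 0, and define r̄ = 3τ, v̄ = τ/(1+3β), q = 2τ. Let α₀ > 0 and suppose h₁, h₂ : ℝ → ℝ₊ are measurable with h_i(z) ≤ C|z|^{-(1+β)} for all 0 < |z| ≤ 2α₀ and some C > 0. Then there exists K > 0 such that for all sufficiently small Δ > 0: ∫∫ 1_{|x−z| ≤ Δ^{r̄}} · 1_{Δ^{v̄}/2 < |x| ≤ α₀} · 1_{Δ^{v̄}/2 < |z| ≤ α₀} h₁(x) h₂(z) dx dz ≤ K·Δ^q. -/

import Mathlib

open MeasureTheory ENNReal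
open intervalIntegral

/-- The double-integral estimate from the proof of Proposition 6.10 (easier) of the paper:
with `r̄ = 3τ`, `v̄ = τ/(1+3β)` and `q = 2τ`, densities bounded by `C|z|^{-(1+β)}` near the
origin satisfy
`∫∫ 1_{|x−z| ≤ Δ^r̄} 1_{Δ^v̄/2 < |x| ≤ α₀} 1_{Δ^v̄/2 < |z| ≤ α₀} h₁(x)h₂(z) dx dz ≤ K Δ^q`
for all sufficiently small `Δ > 0`. -/
theorem double_integral_near_origin_bound
    (β τ α₀ C : ℝ) (hβ0 : 0 < β) (hβ2 : β < 2) (hτ : 0 < τ) (hα : 0 < α₀) (hC : 0 < C)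
    (h₁ h₂ : ℝ → ℝ) (hm1 : Measurable h₁) (hm2 : Measurable h₂)
    (hpos1 : ∀ z : ℝ, 0 ≤ h₁ z) (hpos2 : ∀ z : ℝ, 0 ≤ h₂ z)
    (hb1 : ∀ z : ℝ, 0 < |z| → |z| ≤ 2 * α₀ → h₁ z ≤ C * |z| ^ (-(1 + β)))
    (hb2 : ∀ z : ℝ, 0 < |z| → |z| ≤ 2 * α₀ → h₂ z ≤ C * |z| ^ (-(1 + β))) :
    ∃ K > (0 : ℝ), ∃ Δ₀ > (0 : ℝ), ∀ Δ : ℝ, 0 < Δ → Δ < Δ₀ →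
      (∫⁻ x : ℝ, ∫⁻ z : ℝ, ENNReal.ofReal
          ((if |x - z| ≤ Δ ^ (3 * τ) then (1 : ℝ) else 0) *
           (if Δ ^ (τ / (1 + 3 * β)) / 2 < |x| ∧ |x| ≤ α₀ then (1 : ℝ) else 0) *
           (if Δ ^ (τ / (1 + 3 * β)) / 2 < |z| ∧ |z| ≤ α₀ then (1 : ℝ) else 0) *
           h₁ x * h₂ z)) ≤ ENNReal.ofReal (K * Δ ^ (2 * τ)) := by
  have hβ1 : (0:ℝ) < 1 + 3 * β := by linarith
  set v : ℝ := τ / (1 + 3 * β) with hv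
  have hv0 : 0 < v := div_pos hτ hβ1
  set s : ℝ := 1 - β / 2 with hs
  have hs0 : 0 < s := by rw [hs]; linarith
  have hs1 : (-1 : ℝ) < -s := by rw [hs]; linarith
  set e : ℝ := -(1 + 5 * β / 2) with he
  set I : ℝ := 2 * (α₀ ^ (-s + 1) / (-s + 1)) with hI
  have hsp : (0:ℝ) < -s + 1 := by rw [hs]; linarith
  have hIpos : 0 < I := by
    have := Real.rpow_pos_of_pos hα (-s + 1)
    rw [hI]; positivity
  set K : ℝ := C ^ 2 * 2 ^ (-e) * I * 2 with hK
  have hKpos : 0 < K := by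
    have h2e : (0:ℝ) < 2 ^ (-e) := Real.rpow_pos_of_pos two_pos _
    rw [hK]; positivity
  refine ⟨K, hKpos, 1, one_pos, fun Δ hΔ hΔ1 => ?_⟩
  set a : ℝ := Δ ^ v / 2 with ha
  have ha0 : 0 < a := by
    have := Real.rpow_pos_of_pos hΔ v
    rw [ha]; positivity
  set t : ℝ := Δ ^ (3 * τ) with htdef
  have ht0 : 0 < t := Real.rpow_pos_of_pos hΔ _
  set B : ℝ := C ^ 2 * a ^ (-(1 + β)) * a ^ (-(3 * β / 2)) with hB
  have hB0 : 0 ≤ B := by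
    have h1 := Real.rpow_pos_of_pos ha0 (-(1 + β))
    have h2 := Real.rpow_pos_of_pos ha0 (-(3 * β / 2))
    rw [hB]; positivity
  set w : ℝ → ℝ := fun x => if |x| ≤ α₀ then |x| ^ (-s) else 0 with hw
  have hw0 : ∀ x, 0 ≤ w x := by
    intro x; rw [hw]; dsimp only
    split
    · exact Real.rpow_nonneg (abs_nonneg x) _
    · exact le_refl 0
  -- pointwise bound
  have key : ∀ x z : ℝ,
      (if |x - z| ≤ t then (1 : ℝ) else 0) *
           (if a < |x| ∧ |x| ≤ α₀ then (1 : ℝ) else 0) *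
           (if a < |z| ∧ |z| ≤ α₀ then (1 : ℝ) else 0) *
           h₁ x * h₂ z ≤ (if |x - z| ≤ t then (1 : ℝ) else 0) * (B * w x) := by
    intro x z
    by_cases h1i : |x - z| ≤ t
    · simp only [h1i, if_true, one_mul]
      by_cases h2i : a < |x| ∧ |x| ≤ α₀
      · by_cases h3i : a < |z| ∧ |z| ≤ α₀
        · rw [if_pos h2i, if_pos h3i]; simp only [one_mul, mul_one]
          have hx0 : 0 < |x| := lt_trans ha0 h2i.1
          have hz0 : 0 < |z| := lt_trans ha0 h3i.1
          have hwx : w x = |x| ^ (-s) := by rw [hw]; simp [h2i.2]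
          have hx2 : |x| ≤ 2 * α₀ := by linarith [h2i.2]
          have hz2 : |z| ≤ 2 * α₀ := by linarith [h3i.2]
          have hA : h₂ z ≤ C * a ^ (-(1 + β)) := by
            refine le_trans (hb2 z hz0 hz2) ?_
            have : |z| ^ (-(1 + β)) ≤ a ^ (-(1 + β)) :=
              Real.rpow_le_rpow_of_nonpos ha0 (le_of_lt h3i.1) (by linarith)
            nlinarith
          have hsplit : |x| ^ (-(1 + β)) = |x| ^ (-(3 * β / 2)) * |x| ^ (-s) := by
            rw [show (-(1 + β)) = (-(3 * β / 2)) + (-s) by rw [hs]; ring,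
              Real.rpow_add hx0]
          have hXA : |x| ^ (-(3 * β / 2)) ≤ a ^ (-(3 * β / 2)) :=
            Real.rpow_le_rpow_of_nonpos ha0 (le_of_lt h2i.1) (by linarith)
          calc h₁ x * h₂ z ≤ (C * |x| ^ (-(1 + β))) * (C * a ^ (-(1 + β))) := by
                refine mul_le_mul (hb1 x hx0 hx2) hA (hpos2 z) ?_
                have := Real.rpow_pos_of_pos hx0 (-(1 + β)); positivity
            _ = (C ^ 2 * a ^ (-(1 + β)) * |x| ^ (-s)) * |x| ^ (-(3 * β / 2)) := by
                rw [hsplit]; ring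
            _ ≤ (C ^ 2 * a ^ (-(1 + β)) * |x| ^ (-s)) * a ^ (-(3 * β / 2)) := by
                refine mul_le_mul_of_nonneg_left hXA ?_
                have h1 := Real.rpow_pos_of_pos ha0 (-(1 + β))
                have h2 := Real.rpow_nonneg (abs_nonneg x) (-s)
                positivity
            _ = B * w x := by rw [hwx, hB]; ring
        · simp only [h3i, if_false]
          have : (0:ℝ) ≤ B * w x := mul_nonneg hB0 (hw0 x)
          simpa using this
      · simp only [h2i, if_false]
        have : (0:ℝ) ≤ B * w x := mul_nonneg hB0 (hw0 x)
        have h2 : (0:ℝ) ≤ h₁ x * h₂ z := mul_nonneg (hpos1 x) (hpos2 z)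
        simpa using this
    · simp [h1i]
  -- inner integral bound
  have step1 : ∀ x : ℝ, (∫⁻ z : ℝ, ENNReal.ofReal
        ((if |x - z| ≤ t then (1 : ℝ) else 0) *
         (if a < |x| ∧ |x| ≤ α₀ then (1 : ℝ) else 0) *
         (if a < |z| ∧ |z| ≤ α₀ then (1 : ℝ) else 0) *
         h₁ x * h₂ z)) ≤ ENNReal.ofReal (B * w x) * ENNReal.ofReal (2 * t) := by
    intro x
    have mono : (∫⁻ z : ℝ, ENNReal.ofReal
        ((if |x - z| ≤ t then (1 : ℝ) else 0) *
         (if a < |x| ∧ |x| ≤ α₀ then (1 : ℝ) else 0) *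
         (if a < |z| ∧ |z| ≤ α₀ then (1 : ℝ) else 0) *
         h₁ x * h₂ z)) ≤
        ∫⁻ z : ℝ, ENNReal.ofReal ((if |x - z| ≤ t then (1 : ℝ) else 0) * (B * w x)) :=
      lintegral_mono fun z => ENNReal.ofReal_le_ofReal (key x z)
    refine le_trans mono (le_of_eq ?_)
    have hcongr : ∀ z : ℝ, ENNReal.ofReal ((if |x - z| ≤ t then (1 : ℝ) else 0) * (B * w x)) =
        (Set.Icc (x - t) (x + t)).indicator (fun _ => ENNReal.ofReal (B * w x)) z := by
      intro z
      rw [Set.indicator_apply]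
      by_cases hz : |x - z| ≤ t
      · have hmem : z ∈ Set.Icc (x - t) (x + t) := by
          rw [Set.mem_Icc]
          have := abs_sub_le_iff.mp hz
          constructor <;> linarith [this.1, this.2]
        simp [hz, hmem]
      · have hmem : z ∉ Set.Icc (x - t) (x + t) := by
          intro hmem
          rw [Set.mem_Icc] at hmem
          exact hz (abs_sub_le_iff.mpr ⟨by linarith [hmem.2], by linarith [hmem.1]⟩)
        simp [hz, hmem]
    rw [lintegral_congr hcongr, lintegral_indicator measurableSet_Icc, setLIntegral_const,
      Real.volume_Icc, show x + t - (x - t) = 2 * t by ring]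
  -- main estimate
  have hwint : (∫⁻ x : ℝ, ENNReal.ofReal (w x)) ≤ ENNReal.ofReal I := by
    have hind : ∀ x : ℝ, ENNReal.ofReal (w x) =
        (Set.Icc (-α₀) α₀).indicator (fun y => ENNReal.ofReal (|y| ^ (-s))) x := by
      intro x
      rw [Set.indicator_apply, hw]
      by_cases hx : |x| ≤ α₀
      · have hmem : x ∈ Set.Icc (-α₀) α₀ := by rw [Set.mem_Icc, ← abs_le]; exact hx
        simp [hx, hmem]
      · have hmem : x ∉ Set.Icc (-α₀) α₀ := by rw [Set.mem_Icc, ← abs_le]; exact hx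
        simp [hx, hmem]
    rw [lintegral_congr hind, lintegral_indicator measurableSet_Icc]
    have hsub : Set.Icc (-α₀) α₀ ⊆ {-α₀} ∪ Set.Ioc (-α₀) α₀ := by
      intro x hx
      rcases eq_or_lt_of_le hx.1 with h | h
      · exact Or.inl (by simp [← h])
      · exact Or.inr ⟨h, hx.2⟩
    -- integrability facts
    have hIoc1 : IntegrableOn (fun x : ℝ => |x| ^ (-s)) (Set.Ioc 0 α₀) := by
      have h0 : IntegrableOn (fun x : ℝ => x ^ (-s)) (Set.Ioc 0 α₀) :=
        (intervalIntegrable_iff_integrableOn_Ioc_of_le hα.le).mp (intervalIntegrable_rpow' hs1)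
      exact h0.congr_fun (fun x hx => by rw [abs_of_pos hx.1]) measurableSet_Ioc
    have hiv : IntervalIntegrable (fun x : ℝ => |x| ^ (-s)) volume 0 α₀ :=
      (intervalIntegrable_iff_integrableOn_Ioc_of_le hα.le).mpr hIoc1
    have hiv2 : IntervalIntegrable (fun x : ℝ => |x| ^ (-s)) volume (-α₀) 0 := by
      have h := (IntervalIntegrable.iff_comp_neg enorm_ne_top).mp hiv
      simp only [abs_neg, neg_zero] at h
      exact h.symm
    have hIoc2 : IntegrableOn (fun x : ℝ => |x| ^ (-s)) (Set.Ioc (-α₀) 0) :=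
      (intervalIntegrable_iff_integrableOn_Ioc_of_le (by linarith)).mp hiv2
    have hInt : IntegrableOn (fun x : ℝ => |x| ^ (-s)) (Set.Ioc (-α₀) α₀) := by
      rw [← Set.Ioc_union_Ioc_eq_Ioc (by linarith : -α₀ ≤ (0:ℝ)) hα.le]
      exact hIoc2.union hIoc1
    -- value of the integral
    have hneg : (∫ x in (-α₀)..(0:ℝ), |x| ^ (-s)) = ∫ x in (0:ℝ)..α₀, |x| ^ (-s) := by
      have h := integral_comp_neg (a := 0) (b := α₀) (fun x : ℝ => |x| ^ (-s))
      simp only [abs_neg, neg_zero] at h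
      exact h.symm
    have heq : (∫ x in (0:ℝ)..α₀, |x| ^ (-s)) = ∫ x in (0:ℝ)..α₀, x ^ (-s) :=
      integral_congr fun x hx => by
        rw [Set.uIcc_of_le hα.le] at hx
        rw [abs_of_nonneg hx.1]
    have hposval : (∫ x in (0:ℝ)..α₀, |x| ^ (-s)) = α₀ ^ (-s + 1) / (-s + 1) := by
      rw [heq, integral_rpow (Or.inl hs1), Real.zero_rpow (ne_of_gt hsp), sub_zero]
    have hval : (∫ x in Set.Ioc (-α₀) α₀, |x| ^ (-s)) = I := by
      rw [← integral_of_le (by linarith : -α₀ ≤ α₀),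
        ← integral_add_adjacent_intervals hiv2 hiv, hneg, hposval, hI]
      ring
    calc (∫⁻ x in Set.Icc (-α₀) α₀, ENNReal.ofReal (|x| ^ (-s)))
        ≤ ∫⁻ x in ({-α₀} ∪ Set.Ioc (-α₀) α₀), ENNReal.ofReal (|x| ^ (-s)) :=
          lintegral_mono_set hsub
      _ ≤ (∫⁻ x in ({-α₀} : Set ℝ), ENNReal.ofReal (|x| ^ (-s))) +
            ∫⁻ x in Set.Ioc (-α₀) α₀, ENNReal.ofReal (|x| ^ (-s)) :=
          lintegral_union_le _ _ _
      _ = ∫⁻ x in Set.Ioc (-α₀) α₀, ENNReal.ofReal (|x| ^ (-s)) := by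
          rw [setLIntegral_measure_zero _ _ Real.volume_singleton, zero_add]
      _ = ENNReal.ofReal (∫ x in Set.Ioc (-α₀) α₀, |x| ^ (-s)) :=
          (ofReal_integral_eq_lintegral_ofReal hInt
            (Filter.Eventually.of_forall fun x => Real.rpow_nonneg (abs_nonneg x) _)).symm
      _ = ENNReal.ofReal I := by rw [hval]
  calc (∫⁻ x : ℝ, ∫⁻ z : ℝ, ENNReal.ofReal
          ((if |x - z| ≤ t then (1 : ℝ) else 0) *
           (if a < |x| ∧ |x| ≤ α₀ then (1 : ℝ) else 0) *
           (if a < |z| ∧ |z| ≤ α₀ then (1 : ℝ) else 0) *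
           h₁ x * h₂ z))
      ≤ ∫⁻ x : ℝ, ENNReal.ofReal (B * w x) * ENNReal.ofReal (2 * t) :=
        lintegral_mono step1
    _ = (∫⁻ x : ℝ, ENNReal.ofReal (B * w x)) * ENNReal.ofReal (2 * t) :=
        lintegral_mul_const' _ _ ofReal_ne_top
    _ = (ENNReal.ofReal B * ∫⁻ x : ℝ, ENNReal.ofReal (w x)) * ENNReal.ofReal (2 * t) := by
        rw [← lintegral_const_mul' _ _ ofReal_ne_top]
        congr 1
        exact lintegral_congr fun x => (ENNReal.ofReal_mul hB0)
    _ ≤ (ENNReal.ofReal B * ENNReal.ofReal I) * ENNReal.ofReal (2 * t) := by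
        gcongr
    _ = ENNReal.ofReal (B * I * (2 * t)) := by
        rw [← ENNReal.ofReal_mul hB0, ← ENNReal.ofReal_mul (by positivity : (0:ℝ) ≤ B * I)]
    _ ≤ ENNReal.ofReal (K * Δ ^ (2 * τ)) := by
        apply ENNReal.ofReal_le_ofReal
        have hae : a ^ (-(1 + β)) * a ^ (-(3 * β / 2)) = a ^ e := by
          rw [← Real.rpow_add ha0]; congr 1; rw [he]; ring
        have haev : a ^ e = Δ ^ (v * e) * 2 ^ (-e) := by
          rw [ha, Real.div_rpow (Real.rpow_nonneg hΔ.le v) (by norm_num : (0:ℝ) ≤ 2),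
            ← Real.rpow_mul hΔ.le, div_eq_mul_inv, ← Real.rpow_neg (by norm_num : (0:ℝ) ≤ 2)]
        have hexp : Δ ^ (v * e) * t = Δ ^ (v * e + 3 * τ) := by
          rw [htdef, ← Real.rpow_add hΔ]
        have hge : 2 * τ ≤ v * e + 3 * τ := by
          rw [hv, he]
          have hve : τ * (1 + 5 * β / 2) / (1 + 3 * β) ≤ τ := by
            rw [div_le_iff₀ hβ1]; nlinarith
          have h1 : τ / (1 + 3 * β) * -(1 + 5 * β / 2) = -(τ * (1 + 5 * β / 2) / (1 + 3 * β)) := by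
            ring
          linarith
        have hmono : Δ ^ (v * e + 3 * τ) ≤ Δ ^ (2 * τ) :=
          Real.rpow_le_rpow_of_exponent_ge hΔ hΔ1.le hge
        calc B * I * (2 * t)
              = (a ^ (-(1 + β)) * a ^ (-(3 * β / 2))) * (C ^ 2 * I * 2 * t) := by
              rw [hB]; ring
          _ = a ^ e * (C ^ 2 * I * 2 * t) := by rw [hae]
          _ = K * (Δ ^ (v * e) * t) := by rw [haev, hK]; ring
          _ = K * Δ ^ (v * e + 3 * τ) := by rw [hexp]
          _ ≤ K * Δ ^ (2 * τ) := mul_le_mul_of_nonneg_left hmono hKpos.le
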